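/- Let A be a unital σ-C*-algebra, i.e. a unital pro-C*-algebra whose topology is induced by a countable family of C*-seminorms (equivalently, A is metrizable). If every element a ∈ A is spectrally bounded, i.e. sup{|λ| : λ ∈ sp_A(a)} < ∞ for all a ∈ A, then every element of A is bounded (A_b = A), ‖·‖_∞ is a C*-norm on A, and the topology of A is induced by the single norm ‖·‖_∞; that is, A is a C*-algebra. -/

import Mathlib

open scoped ENNReal

def IsCStarSeminorm {A : Type*} [Ring A] [StarRing A] [Algebra ℂ A] (p : A → ℝ) : Prop :=
  (∀ a, 0 ≤ p a) ∧ (∀ a b, p (a + b) ≤ p a + p b) ∧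
    (∀ (c : ℂ) (a : A), p (c • a) = ‖c‖ * p a) ∧
    (∀ a b, p (a * b) ≤ p a * p b) ∧ (∀ a, p (star a * a) = p a ^ 2)

def contCStarSeminorms (A : Type*) [TopologicalSpace A] [Ring A] [StarRing A] [Algebra ℂ A] :
    Set (A → ℝ) :=
  {p | IsCStarSeminorm p ∧ Continuous p}

class ProCStarAlgebra (A : Type*) [UniformSpace A] [Ring A] [StarRing A] [Algebra ℂ A] :
    Prop where
  t2 : T2Space A
  complete : CompleteSpace A
  topologicalRing : IsTopologicalRing A
  continuousStar : ContinuousStar A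
  uniformAddGroup : IsUniformAddGroup A
  mem_nhds_zero : ∀ s : Set A, s ∈ nhds (0 : A) ↔
    ∃ p ∈ contCStarSeminorms A, ∃ ε : ℝ, 0 < ε ∧ {a : A | p a < ε} ⊆ s

noncomputable def uniformNorm (A : Type*) [UniformSpace A] [Ring A] [StarRing A] [Algebra ℂ A]
    (a : A) : ℝ≥0∞ :=
  ⨆ p ∈ contCStarSeminorms A, ENNReal.ofReal (p a)

def boundedElems (A : Type*) [UniformSpace A] [Ring A] [StarRing A] [Algebra ℂ A] : Set A :=
  {a | uniformNorm A a < ⊤}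

def expSet (A : Type*) [UniformSpace A] [Ring A] [StarRing A] [Algebra ℂ A] : Set A :=
  {w | ∃ (n : ℕ) (a e : Fin n → A),
    (∀ j, star (a j) = a j) ∧
    (∀ j, HasSum (fun k : ℕ => ((Complex.I ^ k / (k.factorial : ℂ)) • a j ^ k)) (e j)) ∧
    w = (List.ofFn e).prod}

section Aux

open UniformSpace Filter Topology ENNReal

lemma auxSpectralRadius {B : Type*} [NormedRing B] [NormedAlgebra ℂ B] [CompleteSpace B]
    (x : B) (hx : ∀ k : ℕ, ‖x ^ 2 ^ k‖₊ = ‖x‖₊ ^ 2 ^ k) : spectralRadius ℂ x = ‖x‖₊ := by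
  have hconst : Tendsto (fun _n : ℕ => (‖x‖₊ : ℝ≥0∞)) atTop (𝓝 (‖x‖₊ : ℝ≥0∞)) :=
    tendsto_const_nhds
  refine tendsto_nhds_unique ?_ hconst
  convert
    (spectrum.pow_nnnorm_pow_one_div_tendsto_nhds_spectralRadius (x : B)).comp
      (tendsto_pow_atTop_atTop_of_one_lt one_lt_two) using 1
  refine funext fun n => ?_
  rw [Function.comp_apply, hx n, ENNReal.coe_pow, ← rpow_natCast, ← rpow_mul]
  simp

def Cpy {A : Type*} (_p : A → ℝ) : Type _ := A

variable {A : Type*} [Ring A] [StarRing A] [Algebra ℂ A]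

instance {p : A → ℝ} : Ring (Cpy p) := inferInstanceAs (Ring A)
instance {p : A → ℝ} : Algebra ℂ (Cpy p) := inferInstanceAs (Algebra ℂ A)

@[reducible]
noncomputable def cpySR {p : A → ℝ} (hp : IsCStarSeminorm p) : SeminormedRing (Cpy p) :=
  { (inferInstance : Ring (Cpy p)),
    AddGroupSeminorm.toSeminormedAddCommGroup
      { toFun := fun a : Cpy p => p a
        map_zero' := by have := hp.2.2.1 0 (0 : A); rw [zero_smul, norm_zero, zero_mul] at this; exact this
        add_le' := hp.2.1
        neg' := fun a => by have := hp.2.2.1 (-1) (show A from a); rw [neg_smul, one_smul, norm_neg, norm_one, one_mul] at this; exact this } with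
    norm_mul_le := hp.2.2.2.1 }

lemma cstarSeminorm_le_of_spectrum {p : A → ℝ} (hp : IsCStarSeminorm p) {h : A}
    (hh : star h = h) {M : ℝ} (hM0 : 0 ≤ M)
    (hM : ∀ z ∈ spectrum ℂ h, ‖z‖ ≤ M) : p h ≤ M := by
  letI := cpySR hp
  letI : NormedSpace ℂ (Cpy p) := ⟨fun c a => le_of_eq (hp.2.2.1 c a)⟩
  letI : NormedAlgebra ℂ (Completion (Cpy p)) :=
    { (inferInstance : Algebra ℂ (Completion (Cpy p))) with
      norm_smul_le := fun c x => norm_smul_le c x }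
  let π : Cpy p →ₐ[ℂ] Completion (Cpy p) :=
    { UniformSpace.Completion.coeRingHom with commutes' := fun c => rfl }
  have hπ : ∀ a : Cpy p, π a = (a : Completion (Cpy p)) := fun _ => rfl
  have hnormp : ∀ a : Cpy p, ‖a‖ = p a := fun _ => rfl
  have hpow' : ∀ k : ℕ, p ((h : A) ^ 2 ^ k) = p h ^ 2 ^ k := by
    intro k; induction k with
    | zero => simp
    | succ k ih =>
      have hsa : star (h ^ 2 ^ k) = h ^ 2 ^ k := by rw [star_pow, hh]
      calc p (h ^ 2 ^ (k + 1)) = p (star (h ^ 2 ^ k) * h ^ 2 ^ k) := by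
            rw [hsa, ← sq, ← pow_mul, pow_succ]
        _ = p (h ^ 2 ^ k) ^ 2 := hp.2.2.2.2 _
        _ = (p h ^ 2 ^ k) ^ 2 := by rw [ih]
        _ = p h ^ 2 ^ (k + 1) := by rw [← pow_mul, pow_succ]
  have hpow : ∀ k : ℕ, ‖(π h) ^ 2 ^ k‖₊ = ‖π h‖₊ ^ 2 ^ k := by
    intro k
    have e1 : (π h) ^ 2 ^ k = ((h ^ 2 ^ k : Cpy p) : Completion (Cpy p)) := by
      rw [← hπ]; exact (map_pow π h _).symm
    rw [e1, hπ h]; erw [UniformSpace.Completion.nnnorm_coe, UniformSpace.Completion.nnnorm_coe]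
    apply NNReal.coe_injective
    push_cast
    erw [coe_nnnorm]
    exact hpow' k
  have hrad := auxSpectralRadius (π h) hpow
  have hsp := AlgHom.spectrum_apply_subset π h
  have hle : spectralRadius ℂ (π h) ≤ ENNReal.ofReal M := by
    refine iSup₂_le fun z hz => ?_
    rw [← ENNReal.ofReal_coe_nnreal, coe_nnnorm]
    exact ENNReal.ofReal_le_ofReal (hM z (hsp hz))
  rw [hrad] at hle
  have hfin : ‖π h‖ ≤ M := by
    rw [← ENNReal.ofReal_coe_nnreal, coe_nnnorm] at hle
    exact (ENNReal.ofReal_le_ofReal_iff hM0).mp hle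
  calc p h = ‖π h‖ := (UniformSpace.Completion.norm_coe (E := Cpy p) h).symm
    _ ≤ M := hfin

end Aux


/-- Let `A` be a unital σ-C*-algebra, i.e. a unital pro-C*-algebra whose
topology is induced by a countable family of continuous C*-seminorms.  If every element of
`A` is spectrally bounded, then every element of `A` is bounded (`A_b = A`), `‖·‖_∞` is a
C*-norm on `A`, and the topology of `A` is induced by this single norm; that is, `A` is a
C*-algebra. -/
theorem stmt10 {A : Type*} [UniformSpace A] [Ring A] [StarRing A] [Algebra ℂ A]
    [ProCStarAlgebra A]
    (hσ : ∃ P : ℕ → (A → ℝ), (∀ n, P n ∈ contCStarSeminorms A) ∧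
      ∀ s : Set A, s ∈ nhds (0 : A) ↔
        ∃ (n : ℕ) (ε : ℝ), 0 < ε ∧ {a : A | ∀ k ≤ n, P k a < ε} ⊆ s)
    (hsb : ∀ a : A, ∃ M : ℝ, ∀ z ∈ spectrum ℂ a, ‖z‖ ≤ M) :
    boundedElems A = Set.univ ∧
    IsCStarSeminorm (fun a : A => (uniformNorm A a).toReal) ∧
    (∀ a : A, (uniformNorm A a).toReal = 0 → a = 0) ∧
    (∀ s : Set A, s ∈ nhds (0 : A) ↔
      ∃ ε : ℝ, 0 < ε ∧ {a : A | (uniformNorm A a).toReal < ε} ⊆ s) := by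
  haveI : T2Space A := ProCStarAlgebra.t2
  haveI : CompleteSpace A := ProCStarAlgebra.complete
  haveI : IsTopologicalRing A := ProCStarAlgebra.topologicalRing
  haveI : IsUniformAddGroup A := ProCStarAlgebra.uniformAddGroup
  haveI : Nonempty A := ⟨0⟩
  have hzeroS : (fun _ : A => (0 : ℝ)) ∈ contCStarSeminorms A :=
    ⟨⟨fun _ => le_refl 0, fun _ _ => by norm_num, fun _ _ => by norm_num,
      fun _ _ => by norm_num, fun _ => by norm_num⟩, continuous_const⟩
  haveI hSne : Nonempty (contCStarSeminorms A) := ⟨⟨_, hzeroS⟩⟩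
  -- uniform bound on seminorms
  have keybound : ∀ a : A, ∃ C : ℝ, 0 ≤ C ∧ ∀ q ∈ contCStarSeminorms A, q a ≤ C := by
    intro a
    obtain ⟨M, hM⟩ := hsb (star a * a)
    refine ⟨Real.sqrt (max M 0), Real.sqrt_nonneg _, fun q hq => ?_⟩
    have hsa : star (star a * a) = star a * a := by simp [star_mul]
    have h1 : q (star a * a) ≤ max M 0 :=
      cstarSeminorm_le_of_spectrum hq.1 hsa (le_max_right _ _)
        (fun z hz => (hM z hz).trans (le_max_left _ _))
    have h2 : q a ^ 2 ≤ max M 0 := by rw [← hq.1.2.2.2.2 a]; exact h1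
    rw [Real.le_sqrt (hq.1.1 a) (le_max_right M 0)]
    exact h2
  set R : A → ℝ := fun a => ⨆ q : contCStarSeminorms A, (q : A → ℝ) a with hRdef
  have hbdd : ∀ a : A, BddAbove (Set.range fun q : contCStarSeminorms A => (q : A → ℝ) a) := by
    intro a; obtain ⟨C, _, hC⟩ := keybound a
    exact ⟨C, by rintro _ ⟨q, rfl⟩; exact hC q q.2⟩
  have hRq : ∀ (a : A) (q) (_ : q ∈ contCStarSeminorms A), q a ≤ R a := fun a q hq =>
    le_ciSup (hbdd a) (⟨q, hq⟩ : contCStarSeminorms A)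
  have hRle : ∀ (a : A) (c : ℝ), (∀ q ∈ contCStarSeminorms A, q a ≤ c) → R a ≤ c :=
    fun a c hc => ciSup_le fun q => hc q q.2
  have hR0 : ∀ a : A, 0 ≤ R a := fun a => hRq a _ hzeroS
  have hfin : ∀ a : A, uniformNorm A a < ⊤ := by
    intro a; obtain ⟨C, _, hC⟩ := keybound a
    calc uniformNorm A a ≤ ENNReal.ofReal C := by
          refine iSup₂_le fun q hq => ENNReal.ofReal_le_ofReal (hC q hq)
      _ < ⊤ := ENNReal.ofReal_lt_top
  have hN : ∀ a : A, (uniformNorm A a).toReal = R a := by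
    intro a
    refine le_antisymm ?_ ?_
    · refine ENNReal.toReal_le_of_le_ofReal (hR0 a) ?_
      exact iSup₂_le fun q hq => ENNReal.ofReal_le_ofReal (hRq a q hq)
    · refine hRle a _ fun q hq => ?_
      have h1 : ENNReal.ofReal (q a) ≤ uniformNorm A a :=
        le_iSup₂ (f := fun (p : A → ℝ) (_ : p ∈ contCStarSeminorms A) =>
          ENNReal.ofReal (p a)) q hq
      have h2 := ENNReal.toReal_mono (hfin a).ne h1
      rwa [ENNReal.toReal_ofReal (hq.1.1 a)] at h2
  -- R is a C*-seminorm
  have hsmul_le : ∀ (c : ℂ) (a : A), R (c • a) ≤ ‖c‖ * R a := by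
    intro c a
    refine hRle _ _ fun q hq => ?_
    rw [hq.1.2.2.1 c a]
    exact mul_le_mul_of_nonneg_left (hRq a q hq) (norm_nonneg c)
  have hsemi : IsCStarSeminorm R := by
    refine ⟨hR0, ?_, ?_, ?_, ?_⟩
    · intro a b
      exact hRle _ _ fun q hq =>
        (hq.1.2.1 a b).trans (add_le_add (hRq a q hq) (hRq b q hq))
    · intro c a
      rcases eq_or_ne c 0 with rfl | hc
      · simp only [zero_smul, norm_zero, zero_mul]
        refine le_antisymm (hRle _ _ fun q hq => ?_) (hR0 0)
        have h := hq.1.2.2.1 0 (0 : A)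
        simp only [zero_smul, norm_zero, zero_mul] at h
        exact le_of_eq h
      · refine le_antisymm (hsmul_le c a) ?_
        have h2 := hsmul_le c⁻¹ (c • a)
        rw [smul_smul, inv_mul_cancel₀ hc, one_smul] at h2
        have h3 := mul_le_mul_of_nonneg_left h2 (norm_nonneg c)
        calc ‖c‖ * R a ≤ ‖c‖ * (‖c⁻¹‖ * R (c • a)) := h3
          _ = (‖c‖ * ‖c‖⁻¹) * R (c • a) := by rw [norm_inv]; ring
          _ = R (c • a) := by rw [mul_inv_cancel₀ (norm_ne_zero_iff.mpr hc), one_mul]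
    · intro a b
      refine hRle _ _ fun q hq => (hq.1.2.2.2.1 a b).trans ?_
      exact mul_le_mul (hRq a q hq) (hRq b q hq) (hq.1.1 b) (hR0 a)
    · intro a
      refine le_antisymm ?_ ?_
      · refine hRle _ _ fun q hq => ?_
        rw [hq.1.2.2.2.2 a]
        exact pow_le_pow_left₀ (hq.1.1 a) (hRq a q hq) 2
      · have h1 : R a ≤ Real.sqrt (R (star a * a)) := by
          refine hRle _ _ fun q hq => ?_
          rw [Real.le_sqrt (hq.1.1 a) (hR0 _), ← hq.1.2.2.2.2 a]
          exact hRq _ q hq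
        calc R a ^ 2 ≤ Real.sqrt (R (star a * a)) ^ 2 := pow_le_pow_left₀ (hR0 a) h1 2
          _ = R (star a * a) := Real.sq_sqrt (hR0 _)
  -- norm property
  have hnorm0 : ∀ a : A, R a = 0 → a = 0 := by
    intro a ha
    by_contra hne
    have hopen : ({a}ᶜ : Set A) ∈ nhds (0 : A) := by
      refine IsOpen.mem_nhds isOpen_compl_singleton ?_
      simpa using (Ne.symm hne)
    obtain ⟨q, hq, ε, hε, hsub⟩ := (ProCStarAlgebra.mem_nhds_zero _).mp hopen
    have hlt : q a < ε := lt_of_le_of_lt ((hRq a q hq).trans ha.le) hε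
    exact (hsub hlt) rfl
  -- countably generated & Baire
  obtain ⟨P, hPmem, hPbasis⟩ := hσ
  haveI : (nhds (0 : A)).IsCountablyGenerated := by
    have hbas : Filter.HasBasis (nhds (0 : A)) (fun _ : ℕ × ℕ => True)
        (fun nm => {a : A | ∀ k ≤ nm.1, P k a < 1 / ((nm.2 : ℝ) + 1)}) := by
      constructor
      intro t
      simp only [true_and]
      rw [hPbasis t]
      constructor
      · rintro ⟨n, ε, hε, hsub⟩
        obtain ⟨m, hm⟩ := exists_nat_one_div_lt hε
        exact ⟨(n, m), fun a ha => hsub fun k hk => (ha k hk).trans hm⟩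
      · rintro ⟨⟨n, m⟩, hsub⟩
        exact ⟨n, 1 / ((m : ℝ) + 1), by positivity, hsub⟩
    exact hbas.isCountablyGenerated
  haveI : (uniformity A).IsCountablyGenerated :=
    IsUniformAddGroup.uniformity_countably_generated
  haveI : BaireSpace A := BaireSpace.of_completelyPseudoMetrizable
  have hRopen : ∀ ε : ℝ, 0 < ε → {a : A | R a < ε} ∈ nhds (0 : A) := by
    intro ε hε
    have hclosed : ∀ n : ℕ, IsClosed {a : A | R a ≤ (n : ℝ)} := by
      intro n
      have he : {a : A | R a ≤ (n : ℝ)}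
          = ⋂ q : contCStarSeminorms A, {a : A | (q : A → ℝ) a ≤ (n : ℝ)} := by
        ext a
        simp only [Set.mem_setOf_eq, Set.mem_iInter]
        constructor
        · intro hle q; exact (hRq a q q.2).trans hle
        · intro hq; exact hRle a _ fun q hq' => hq ⟨q, hq'⟩
      rw [he]
      exact isClosed_iInter fun q => isClosed_le q.2.2 continuous_const
    have hunion : (⋃ n : ℕ, {a : A | R a ≤ (n : ℝ)}) = Set.univ := by
      ext a
      simp only [Set.mem_iUnion, Set.mem_univ, iff_true, Set.mem_setOf_eq]
      exact ⟨⌈R a⌉₊, Nat.le_ceil _⟩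
    obtain ⟨n, x, hx⟩ := nonempty_interior_of_iUnion_of_closed hclosed hunion
    have hmemx : {a : A | R a ≤ (n : ℝ)} ∈ nhds x :=
      Filter.mem_of_superset (isOpen_interior.mem_nhds hx) interior_subset
    set C : ℝ := (n : ℝ) + R x + 1 with hCdef
    have hC0 : 0 < C := by have := hR0 x; positivity
    have hV : {u : A | R u ≤ C} ∈ nhds (0 : A) := by
      have hcont : Continuous fun u : A => x + u := continuous_const.add continuous_id
      have h1 : (fun u : A => x + u) ⁻¹' {a : A | R a ≤ (n : ℝ)} ∈ nhds (0 : A) := by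
        apply hcont.continuousAt.preimage_mem_nhds
        simpa using hmemx
      refine Filter.mem_of_superset h1 fun u hu => ?_
      have hneg : R (-x) = R x := by
        have h := hsemi.2.2.1 (-1) x; simpa using h
      have h2 := hsemi.2.1 (x + u) (-x)
      rw [show x + u + -x = u by rw [add_comm x u, add_neg_cancel_right], hneg] at h2
      have h3 : R (x + u) ≤ (n : ℝ) := hu
      show R u ≤ C
      rw [hCdef]
      linarith
    set r : ℝ := ε / (C + 1) with hrdef
    have hr0 : 0 < r := by positivity
    have hcontm : Continuous fun a : A => ((r : ℂ)⁻¹) • a := by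
      simp only [Algebra.smul_def]
      exact continuous_const.mul continuous_id
    have hW : (fun a : A => ((r : ℂ)⁻¹) • a) ⁻¹' {u : A | R u ≤ C} ∈ nhds (0 : A) := by
      apply hcontm.continuousAt.preimage_mem_nhds
      simpa using hV
    refine Filter.mem_of_superset hW fun a ha => ?_
    have h4 : R ((r : ℂ)⁻¹ • a) ≤ C := ha
    have hrc : (r : ℂ) ≠ 0 := by exact_mod_cast ne_of_gt hr0
    have h5 : (r : ℂ) • ((r : ℂ)⁻¹ • a) = a := by
      rw [smul_smul, mul_inv_cancel₀ hrc, one_smul]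
    have h7 : ‖(r : ℂ)‖ = r := by
      rw [Complex.norm_real]; exact Real.norm_of_nonneg hr0.le
    show R a < ε
    calc R a = ‖(r : ℂ)‖ * R ((r : ℂ)⁻¹ • a) := by rw [← h5, hsemi.2.2.1, h5]
      _ = r * R ((r : ℂ)⁻¹ • a) := by rw [h7]
      _ ≤ r * C := mul_le_mul_of_nonneg_left h4 hr0.le
      _ < ε := by
          rw [hrdef, div_mul_eq_mul_div, div_lt_iff₀ (by positivity)]
          nlinarith
  -- assemble
  refine ⟨?_, ?_, ?_, ?_⟩
  · ext a
    simp only [boundedElems, Set.mem_setOf_eq, Set.mem_univ, iff_true]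
    exact hfin a
  · have he : (fun a : A => (uniformNorm A a).toReal) = R := funext hN
    rw [he]; exact hsemi
  · intro a ha
    exact hnorm0 a (by rw [← hN a]; exact ha)
  · intro s
    constructor
    · intro hs
      rw [hPbasis s] at hs
      obtain ⟨n, ε, hε, hsub⟩ := hs
      refine ⟨ε, hε, fun a ha => hsub fun k _ => ?_⟩
      exact lt_of_le_of_lt ((hRq a _ (hPmem k)).trans (hN a).ge) ha
    · rintro ⟨ε, hε, hsub⟩
      refine Filter.mem_of_superset (hRopen ε hε) fun a ha => hsub ?_
      show (uniformNorm A a).toReal < ε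
      rw [hN a]; exact ha
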